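/- Let (a_ε)_ε ∈ 𝒮^m_{Λ,ρ} be a symbol family on ℝⁿ×ℝⁿ and τ ∈ ℝⁿ. Then b_ε(x,y,ξ) := a_ε((1−τ)x + τy, ξ) defines an amplitude in 𝒮̄^m_{Λ,ρ}: for all α, β, γ ∈ ℕⁿ there exist N ∈ ℕ, c > 0 and m' ∈ ℝ (independent of α,β,γ) such that |∂^α_ξ∂^β_x∂^γ_y b_ε(x,y,ξ)| ≤ c·Λ(x,ξ)^m·⟨x−y⟩^{m'}·(1 + Λ(x,ξ)⟨x−y⟩^{−1})^{−ρ|α+β+γ|}·ε^{−N} for all (x,y,ξ) and ε ∈ (0,1]. -/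
import Mathlib


open Set

/-- Japanese bracket `⟨z⟩ = (1+|z|²)^(1/2)`. -/
noncomputable def jap {V : Type*} [NormedAddCommGroup V] (z : V) : ℝ :=
  Real.sqrt (1 + ‖z‖ ^ 2)

lemma one_le_jap {V : Type*} [NormedAddCommGroup V] (z : V) : 1 ≤ jap z := by
  rw [jap]
  have h1 : (1 : ℝ) = Real.sqrt 1 := by simp
  rw [h1]
  exact Real.sqrt_le_sqrt (by nlinarith [sq_nonneg ‖z‖])

lemma jap_le_mul {V W : Type*} [NormedAddCommGroup V] [NormedAddCommGroup W]
    (w : V) (v : W) (t : ℝ) (ht : 1 ≤ t) (h : ‖w‖ ≤ t * ‖v‖) : jap w ≤ t * jap v := by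
  rw [jap, jap]
  have h2 : 1 + ‖w‖ ^ 2 ≤ t ^ 2 * (1 + ‖v‖ ^ 2) := by
    nlinarith [norm_nonneg w, norm_nonneg v]
  calc Real.sqrt (1 + ‖w‖ ^ 2) ≤ Real.sqrt (t ^ 2 * (1 + ‖v‖ ^ 2)) := Real.sqrt_le_sqrt h2
    _ = t * Real.sqrt (1 + ‖v‖ ^ 2) := by
        rw [Real.sqrt_mul (by positivity), Real.sqrt_sq (by linarith)]

/-- The linear substitution `(x,y,ξ) ↦ ((1−τ)x+τy, ξ)` as a continuous linear map. -/
noncomputable def Lmap (n : ℕ) (τ : Fin n → ℝ) :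
    ((Fin n → ℝ) × (Fin n → ℝ) × (Fin n → ℝ)) →L[ℝ] ((Fin n → ℝ) × (Fin n → ℝ)) :=
  LinearMap.toContinuousLinearMap
  { toFun := fun q => ((fun i => (1 - τ i) * q.1 i + τ i * q.2.1 i), q.2.2)
    map_add' := by
      intro p q
      refine Prod.ext ?_ rfl
      funext i
      simp only [Pi.add_apply, Prod.fst_add, Prod.snd_add]
      ring
    map_smul' := by
      intro c p
      refine Prod.ext ?_ rfl
      funext i
      simp only [Pi.smul_apply, smul_eq_mul, Prod.smul_fst, Prod.smul_snd, RingHom.id_apply]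
      ring }

/-- The key pointwise real inequality. -/
lemma key_ineq (C K δ Λz Λζ J m ρk : ℝ) (hC : 1 ≤ C) (hK : 1 ≤ K) (hδ : 0 < δ)
    (hz : 0 < Λz) (hζ : 0 < Λζ) (hJ : 1 ≤ J) (hδz : δ ≤ Λz)
    (h1 : Λz ≤ C * Λζ * (K * J)) (h2 : Λζ ≤ C * Λz * (K * J)) (hρk : 0 ≤ ρk) :
    Λz ^ (m - ρk) ≤ (C * K) ^ |m| * (1 / δ + C * K) ^ ρk *
      (Λζ ^ m * J ^ |m| * (1 + Λζ * J⁻¹) ^ (-ρk)) := by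
  have hJ0 : (0 : ℝ) < J := lt_of_lt_of_le one_pos hJ
  have hCK : (1 : ℝ) ≤ C * K := le_trans hC (by nlinarith)
  have hCK0 : (0 : ℝ) < C * K := lt_of_lt_of_le one_pos hCK
  have hB : (0 : ℝ) < 1 + Λζ * J⁻¹ := by positivity
  have split : Λz ^ (m - ρk) = Λz ^ m * Λz ^ (-ρk) := by
    rw [← Real.rpow_add hz]; ring_nf
  have step1 : Λz ^ m ≤ (C * K) ^ |m| * (Λζ ^ m * J ^ |m|) := by
    rcases le_or_gt 0 m with hm | hm
    · rw [abs_of_nonneg hm]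
      calc Λz ^ m ≤ (C * Λζ * (K * J)) ^ m := Real.rpow_le_rpow hz.le h1 hm
        _ = (C * K) ^ m * (Λζ ^ m * J ^ m) := by
            rw [show C * Λζ * (K * J) = (C * K) * (Λζ * J) by ring,
              Real.mul_rpow hCK0.le (by positivity),
              Real.mul_rpow hζ.le hJ0.le]
    · rw [abs_of_neg hm]
      have hle : Λζ * ((C * K) * J)⁻¹ ≤ Λz := by
        rw [mul_inv_le_iff₀ (by positivity)]
        nlinarith
      have hstep : Λz ^ m ≤ (Λζ * ((C * K) * J)⁻¹) ^ m :=
        Real.rpow_le_rpow_of_nonpos (by positivity) hle hm.le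
      refine hstep.trans_eq ?_
      rw [Real.mul_rpow hζ.le (by positivity), Real.inv_rpow (by positivity),
        ← Real.rpow_neg (by positivity), Real.mul_rpow hCK0.le hJ0.le]
      ring
  have step2 : Λz ^ (-ρk) ≤ (1 / δ + C * K) ^ ρk * (1 + Λζ * J⁻¹) ^ (-ρk) := by
    have hA : 1 + Λζ * J⁻¹ ≤ (1 / δ + C * K) * Λz := by
      have ha1 : (1 : ℝ) ≤ (1 / δ) * Λz := by
        rw [one_div, inv_mul_eq_div, le_div_iff₀ hδ]
        linarith
      have ha2 : Λζ * J⁻¹ ≤ (C * K) * Λz := by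
        rw [mul_inv_le_iff₀ hJ0]
        nlinarith
      nlinarith
    have hmono : ((1 / δ + C * K) * Λz) ^ (-ρk) ≤ (1 + Λζ * J⁻¹) ^ (-ρk) :=
      Real.rpow_le_rpow_of_nonpos hB hA (neg_nonpos.mpr hρk)
    have heq : Λz ^ (-ρk) = (1 / δ + C * K) ^ ρk * ((1 / δ + C * K) * Λz) ^ (-ρk) := by
      rw [Real.mul_rpow (by positivity) hz.le, ← mul_assoc,
        ← Real.rpow_add (by positivity : (0:ℝ) < 1 / δ + C * K)]
      simp
    rw [heq]
    exact mul_le_mul_of_nonneg_left hmono (Real.rpow_nonneg (by positivity) _)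
  calc Λz ^ (m - ρk) = Λz ^ m * Λz ^ (-ρk) := split
    _ ≤ ((C * K) ^ |m| * (Λζ ^ m * J ^ |m|)) * ((1 / δ + C * K) ^ ρk * (1 + Λζ * J⁻¹) ^ (-ρk)) :=
        mul_le_mul step1 step2 (Real.rpow_nonneg hz.le _)
          (by positivity)
    _ = (C * K) ^ |m| * (1 / δ + C * K) ^ ρk * (Λζ ^ m * J ^ |m| * (1 + Λζ * J⁻¹) ^ (-ρk)) := by
        ring

theorem stmt17 {n : ℕ} (Λ : (Fin n → ℝ) × (Fin n → ℝ) → ℝ) (hpos : ∀ z, 0 < Λ z)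
    (C : ℝ) (hC : 0 < C) (htemp : ∀ z ζ, Λ z ≤ C * Λ ζ * jap (z - ζ))
    (hscale : ∀ t : (Fin n → ℝ) × (Fin n → ℝ), ∃ c > (0 : ℝ),
      ∀ z : (Fin n → ℝ) × (Fin n → ℝ), Λ (t.1 * z.1, t.2 * z.2) ≤ c * Λ z)
    (m ρ : ℝ) (hρ : ρ ∈ Set.Ioc (0 : ℝ) 1)
    (a : ℝ → (Fin n → ℝ) × (Fin n → ℝ) → ℂ)
    (hsm : ∀ ε ∈ Set.Ioc (0 : ℝ) 1, ContDiff ℝ (⊤ : ℕ∞) (a ε))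
    (ha : ∀ k : ℕ, ∃ N : ℕ, ∃ c : ℝ, ∀ ε ∈ Set.Ioc (0 : ℝ) 1, ∀ z,
      ‖iteratedFDeriv ℝ k (a ε) z‖ ≤ c * Λ z ^ (m - ρ * (k : ℝ)) * ε⁻¹ ^ N)
    (τ : Fin n → ℝ) :
    ∃ m' : ℝ, ∀ k : ℕ, ∃ N : ℕ, ∃ c : ℝ, ∀ ε ∈ Set.Ioc (0 : ℝ) 1,
      ∀ p : (Fin n → ℝ) × (Fin n → ℝ) × (Fin n → ℝ),
      ‖iteratedFDeriv ℝ k (fun q : (Fin n → ℝ) × (Fin n → ℝ) × (Fin n → ℝ) =>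
          a ε ((fun i => (1 - τ i) * q.1 i + τ i * q.2.1 i), q.2.2)) p‖ ≤
        c * Λ (p.1, p.2.2) ^ m * jap (p.1 - p.2.1) ^ m' *
          (1 + Λ (p.1, p.2.2) * (jap (p.1 - p.2.1))⁻¹) ^ (-(ρ * (k : ℝ))) *
          ε⁻¹ ^ N := by
  obtain ⟨hρ0, hρ1⟩ := hρ
  set K : ℝ := max 1 ‖τ‖ with hKdef
  have hK1 : (1 : ℝ) ≤ K := le_max_left _ _
  have hC1 : (1 : ℝ) ≤ C := by
    have h := htemp (0, 0) (0, 0)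
    have hj : jap (((0, 0) : (Fin n → ℝ) × (Fin n → ℝ)) - (0, 0)) = 1 := by
      simp [jap]
    rw [hj, mul_one] at h
    have h0 := hpos (0, 0)
    nlinarith
  obtain ⟨c₀, hc₀pos, hlow⟩ := hscale (0, 0)
  set δ : ℝ := Λ (0, 0) / c₀ with hδdef
  have hδ : 0 < δ := div_pos (hpos _) hc₀pos
  have hδle : ∀ z, δ ≤ Λ z := by
    intro z
    have h := hlow z
    have e : Λ (((0, 0) : (Fin n → ℝ) × (Fin n → ℝ)).1 * z.1,
        ((0, 0) : (Fin n → ℝ) × (Fin n → ℝ)).2 * z.2) = Λ (0, 0) := by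
      norm_num
    rw [e] at h
    rw [hδdef, div_le_iff₀ hc₀pos]
    nlinarith
  set L := Lmap n τ with hLdef
  refine ⟨|m|, fun k => ?_⟩
  obtain ⟨N, c0, hc⟩ := ha k
  set c1 : ℝ := max c0 0 with hc1def
  have hc1 : 0 ≤ c1 := le_max_right _ _
  refine ⟨N, c1 * ‖L‖ ^ k * ((C * K) ^ |m| * (1 / δ + C * K) ^ (ρ * (k : ℝ))), ?_⟩
  intro ε hε p
  have hεpos : 0 < ε := hε.1
  set ζ : (Fin n → ℝ) × (Fin n → ℝ) := (p.1, p.2.2) with hζdef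
  set J : ℝ := jap (p.1 - p.2.1) with hJdef
  have hJ1 : (1 : ℝ) ≤ J := one_le_jap _
  -- norm bound of the difference
  have hdn : ‖L p - ζ‖ ≤ K * ‖p.1 - p.2.1‖ := by
    have hKnn : 0 ≤ K * ‖p.1 - p.2.1‖ := by positivity
    rw [Prod.norm_def]
    apply max_le
    · have e1 : (L p - ζ).1 = fun i => τ i * (p.2.1 i - p.1 i) := by
        funext i
        show (1 - τ i) * p.1 i + τ i * p.2.1 i - p.1 i = _
        ring
      rw [e1]
      refine (pi_norm_le_iff_of_nonneg hKnn).2 fun i => ?_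
      have h1 : ‖τ i‖ ≤ ‖τ‖ := norm_le_pi_norm τ i
      have h2 : ‖p.2.1 i - p.1 i‖ ≤ ‖p.1 - p.2.1‖ := by
        rw [norm_sub_rev]
        exact norm_le_pi_norm (p.1 - p.2.1) i
      calc ‖τ i * (p.2.1 i - p.1 i)‖ = ‖τ i‖ * ‖p.2.1 i - p.1 i‖ := norm_mul _ _
        _ ≤ ‖τ‖ * ‖p.1 - p.2.1‖ :=
            mul_le_mul h1 h2 (norm_nonneg _) (norm_nonneg _)
        _ ≤ K * ‖p.1 - p.2.1‖ :=
            mul_le_mul_of_nonneg_right (le_max_right _ _) (norm_nonneg _)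
    · have e2 : (L p - ζ).2 = 0 := by
        show p.2.2 - p.2.2 = 0
        simp
      rw [e2, norm_zero]
      exact hKnn
  have hjap : jap (L p - ζ) ≤ K * J := jap_le_mul _ _ K hK1 hdn
  have hjap' : jap (ζ - L p) ≤ K * J := by
    have : jap (ζ - L p) = jap (L p - ζ) := by rw [jap, jap, norm_sub_rev]
    rw [this]; exact hjap
  have h1 : Λ (L p) ≤ C * Λ ζ * (K * J) := by
    calc Λ (L p) ≤ C * Λ ζ * jap (L p - ζ) := htemp _ _
      _ ≤ C * Λ ζ * (K * J) :=
          mul_le_mul_of_nonneg_left hjap (mul_nonneg hC.le (hpos ζ).le)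
  have h2 : Λ ζ ≤ C * Λ (L p) * (K * J) := by
    calc Λ ζ ≤ C * Λ (L p) * jap (ζ - L p) := htemp _ _
      _ ≤ C * Λ (L p) * (K * J) :=
          mul_le_mul_of_nonneg_left hjap' (mul_nonneg hC.le (hpos (L p)).le)
  have key := key_ineq C K δ (Λ (L p)) (Λ ζ) J m (ρ * (k : ℝ)) hC1 hK1 hδ
    (hpos _) (hpos _) hJ1 (hδle _) h1 h2 (by positivity)
  -- derivative bound via composition with the linear map
  have hfun : (fun q : (Fin n → ℝ) × (Fin n → ℝ) × (Fin n → ℝ) =>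
      a ε ((fun i => (1 - τ i) * q.1 i + τ i * q.2.1 i), q.2.2)) = (a ε) ∘ L := rfl
  have hcomp := L.iteratedFDeriv_comp_right (hsm ε hε) p (by exact_mod_cast le_top : ((k:ℕ) : WithTop ℕ∞) ≤ ((⊤ : ℕ∞) : WithTop ℕ∞))
  have hnorm : ‖iteratedFDeriv ℝ k ((a ε) ∘ L) p‖ ≤
      ‖iteratedFDeriv ℝ k (a ε) (L p)‖ * ‖L‖ ^ k := by
    rw [hcomp]
    simpa [Finset.prod_const, Finset.card_univ] using
      ContinuousMultilinearMap.norm_compContinuousLinearMap_le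
        (iteratedFDeriv ℝ k (a ε) (L p)) (fun _ : Fin k => L)
  have hc' : ‖iteratedFDeriv ℝ k (a ε) (L p)‖ ≤
      c1 * Λ (L p) ^ (m - ρ * (k : ℝ)) * ε⁻¹ ^ N := by
    refine (hc ε hε (L p)).trans ?_
    have : c0 ≤ c1 := le_max_left _ _
    have hP : 0 ≤ Λ (L p) ^ (m - ρ * (k : ℝ)) * ε⁻¹ ^ N :=
      mul_nonneg (Real.rpow_nonneg (hpos _).le _) (by positivity)
    calc c0 * Λ (L p) ^ (m - ρ * (k : ℝ)) * ε⁻¹ ^ N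
        = c0 * (Λ (L p) ^ (m - ρ * (k : ℝ)) * ε⁻¹ ^ N) := by ring
      _ ≤ c1 * (Λ (L p) ^ (m - ρ * (k : ℝ)) * ε⁻¹ ^ N) :=
          mul_le_mul_of_nonneg_right this hP
      _ = c1 * Λ (L p) ^ (m - ρ * (k : ℝ)) * ε⁻¹ ^ N := by ring
  rw [hfun]
  calc ‖iteratedFDeriv ℝ k ((a ε) ∘ L) p‖
      ≤ ‖iteratedFDeriv ℝ k (a ε) (L p)‖ * ‖L‖ ^ k := hnorm
    _ ≤ (c1 * Λ (L p) ^ (m - ρ * (k : ℝ)) * ε⁻¹ ^ N) * ‖L‖ ^ k :=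
        mul_le_mul_of_nonneg_right hc' (by positivity)
    _ = (c1 * ε⁻¹ ^ N * ‖L‖ ^ k) * Λ (L p) ^ (m - ρ * (k : ℝ)) := by ring
    _ ≤ (c1 * ε⁻¹ ^ N * ‖L‖ ^ k) * ((C * K) ^ |m| * (1 / δ + C * K) ^ (ρ * (k : ℝ)) *
          (Λ ζ ^ m * J ^ |m| * (1 + Λ ζ * J⁻¹) ^ (-(ρ * (k : ℝ))))) :=
        mul_le_mul_of_nonneg_left key (by positivity)
    _ = c1 * ‖L‖ ^ k * ((C * K) ^ |m| * (1 / δ + C * K) ^ (ρ * (k : ℝ))) *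
          Λ ζ ^ m * J ^ |m| * (1 + Λ ζ * J⁻¹) ^ (-(ρ * (k : ℝ))) * ε⁻¹ ^ N := by ring
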